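/- arXiv:1907.07908 — 2 statements merged into one kernel-verified Lean document; each statement's English description precedes it below -/
import Mathlib

section
/- Let A be the adjacency matrix of a finite simple connected undirected graph on n vertices with eigenvalues λ_1 > λ_2 ≥ ⋯ ≥ λ_n and orthonormal eigenvectors ψ_1,…,ψ_n, where ψ_1 is the Perron eigenvector with positive entries. Define R̃_i(ζ) = R_i(ζ)/(e^{ζλ_1}(ψ_1ᵀ1)) where R_i(ζ) = (e^{ζA}·1)_i. Then lim_{ζ→∞} R̃_i(ζ) = ψ_{1,i} for every node i; i.e., the ranking induced by R_i(ζ) converges to the eigenvector-centrality ranking as ζ → ∞. -/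
open Filter Topology NormedSpace
open Matrix

/-- the normalized total communicability
`R̃_i(ζ) = R_i(ζ)/(e^{ζλ₁}(ψ₁ᵀ1))` tends to the Perron eigenvector entry `ψ₁ᵢ` as `ζ → ∞`. -/
theorem riskCentrality_tendsto_eigenvector {n : ℕ} (G : SimpleGraph (Fin n))
    [DecidableRel G.Adj] (hconn : G.Connected) (lam1 : ℝ) (ψ1 : Fin n → ℝ)
    (heig : (G.adjMatrix ℝ).mulVec ψ1 = lam1 • ψ1)
    (hpos : ∀ j, 0 < ψ1 j)
    (hnorm : ∑ j, (ψ1 j) ^ 2 = 1)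
    (hmax : ∀ (μ : ℝ) (v : Fin n → ℝ), v ≠ 0 →
      (G.adjMatrix ℝ).mulVec v = μ • v → μ ≤ lam1)
    (hsimple : ∀ v : Fin n → ℝ, (G.adjMatrix ℝ).mulVec v = lam1 • v → ∃ c : ℝ, v = c • ψ1)
    (i : Fin n) :
    Tendsto (fun ζ : ℝ =>
        ((exp (ζ • (G.adjMatrix ℝ))).mulVec (fun _ => 1)) i /
          (Real.exp (ζ * lam1) * ∑ j, ψ1 j))
      atTop (𝓝 (ψ1 i)) := by
  classical
  have hA : (G.adjMatrix ℝ).IsHermitian := by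
    rw [Matrix.IsHermitian]
    ext a b
    simp [Matrix.conjTranspose_apply, G.adj_comm]
  set A := G.adjMatrix ℝ with hAdef
  set B := hA.eigenvectorBasis with hB
  set lam := hA.eigenvalues with hlamdef
  set U : Matrix (Fin n) (Fin n) ℝ := (hA.eigenvectorUnitary : Matrix (Fin n) (Fin n) ℝ) with hUdef
  have hUapply : ∀ a k, U a k = B k a := fun a k => hA.eigenvectorUnitary_apply a k
  have hBeig : ∀ k, A *ᵥ ⇑(B k) = lam k • ⇑(B k) := hA.mulVec_eigenvectorBasis
  have hBne : ∀ k, ⇑(B k) ≠ (0 : Fin n → ℝ) := by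
    intro k h
    exact B.orthonormal.ne_zero k (by ext j; exact congrFun h j)
  have hle : ∀ k, lam k ≤ lam1 := fun k => hmax (lam k) (B k) (hBne k) (hBeig k)
  have horth : ∀ k l, (∑ j, B k j * B l j) = if k = l then 1 else 0 := by
    intro k l
    have h := (orthonormal_iff_ite (𝕜 := ℝ)).mp B.orthonormal k l
    rw [PiLp.inner_apply] at h
    simpa [mul_comm] using h
  -- symmetry of the dot product against A
  have hsym : ∀ a b, A a b = A b a := by
    intro a b; simp [hAdef, G.adj_comm]
  have hdotsym : ∀ v w : Fin n → ℝ, (A *ᵥ v) ⬝ᵥ w = v ⬝ᵥ (A *ᵥ w) := by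
    intro v w
    simp only [dotProduct, Matrix.mulVec, dotProduct, Finset.sum_mul,
      Finset.mul_sum]
    rw [Finset.sum_comm]
    apply Finset.sum_congr rfl
    intro a _
    apply Finset.sum_congr rfl
    intro b _
    rw [hsym a b]; ring
  -- existence of the top eigenvalue among the lam k
  have hexists : ∃ k, lam k = lam1 := by
    by_contra h
    push_neg at h
    have hzero : ∀ k, (⇑(B k) ⬝ᵥ ψ1) = 0 := by
      intro k
      have h1 : (A *ᵥ ⇑(B k)) ⬝ᵥ ψ1 = lam k * (⇑(B k) ⬝ᵥ ψ1) := by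
        rw [hBeig k, smul_dotProduct]; rfl
      have h2 : ⇑(B k) ⬝ᵥ (A *ᵥ ψ1) = lam1 * (⇑(B k) ⬝ᵥ ψ1) := by
        rw [heig, dotProduct_smul]; rfl
      have h3 := hdotsym (⇑(B k)) ψ1
      rw [h1, h2] at h3
      rcases mul_eq_mul_right_iff.mp h3 with h4 | h4
      · exact absurd h4 (h k)
      · exact h4
    have hψ0 : (WithLp.equiv 2 (Fin n → ℝ)).symm ψ1 = 0 := by
      apply B.repr.injective
      simp only [map_zero]
      ext k
      rw [B.repr_apply_apply, PiLp.inner_apply]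
      simpa [dotProduct, mul_comm] using hzero k
    have := congrFun (congrArg (WithLp.equiv 2 (Fin n → ℝ)) hψ0) i
    simp at this
    exact absurd (this ▸ hpos i) (lt_irrefl 0)
  obtain ⟨k0, hk0⟩ := hexists
  -- the top eigenvector is ± ψ1
  obtain ⟨c0, hc0⟩ := hsimple (⇑(B k0)) (by rw [hBeig k0, hk0])
  have hc0' : ∀ j, B k0 j = c0 * ψ1 j := fun j => congrFun hc0 j
  have hc0sq : c0 ^ 2 = 1 := by
    have h := horth k0 k0
    simp only [if_pos rfl] at h
    calc c0 ^ 2 = c0 ^ 2 * ∑ j, (ψ1 j) ^ 2 := by rw [hnorm, mul_one]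
    _ = ∑ j, B k0 j * B k0 j := by
        rw [Finset.mul_sum]; apply Finset.sum_congr rfl; intro j _
        rw [hc0']; ring
    _ = 1 := h
  have hc0ne : c0 ≠ 0 := by
    intro h
    apply hBne k0
    rw [hc0, h, zero_smul]
  -- all other eigenvalues are strictly below lam1
  have hlt : ∀ k, k ≠ k0 → lam k < lam1 := by
    intro k hk
    rcases lt_or_eq_of_le (hle k) with h | h
    · exact h
    exfalso
    obtain ⟨c, hc⟩ := hsimple (⇑(B k)) (by rw [hBeig k, h])
    have hc' : ∀ j, B k j = c * ψ1 j := fun j => congrFun hc j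
    have hcne : c ≠ 0 := by
      intro h'
      apply hBne k
      rw [hc, h', zero_smul]
    have h1 : (∑ j, B k j * B k0 j) = c * c0 := by
      calc ∑ j, B k j * B k0 j = c * c0 * ∑ j, (ψ1 j) ^ 2 := by
            rw [Finset.mul_sum]; apply Finset.sum_congr rfl; intro j _
            rw [hc' j, hc0' j]; ring
      _ = c * c0 := by rw [hnorm, mul_one]
    have h2 := horth k k0
    rw [if_neg hk, h1] at h2
    exact (mul_ne_zero hcne hc0ne) h2
  -- basic positivity facts
  have huniv : (Finset.univ : Finset (Fin n)).Nonempty := ⟨i, Finset.mem_univ i⟩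
  have hS : 0 < ∑ j, ψ1 j := Finset.sum_pos (fun j _ => hpos j) huniv
  -- unitary facts
  have hU1 : U * star U = 1 := (Matrix.mem_unitaryGroup_iff).mp hA.eigenvectorUnitary.2
  have hU2 : star U * U = 1 := (Matrix.mem_unitaryGroup_iff').mp hA.eigenvectorUnitary.2
  have hUunit : IsUnit U := ⟨⟨U, star U, hU1, hU2⟩, rfl⟩
  have hUinv : U⁻¹ = star U := Matrix.inv_eq_right_inv hU1
  -- matrix exponential via the spectral theorem
  have hexp : ∀ ζ : ℝ, exp (ζ • A) =
      U * Matrix.diagonal (fun k => Real.exp (ζ * lam k)) * star U := by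
    intro ζ
    have h1 : ζ • A = U * Matrix.diagonal (fun k => ζ * lam k) * star U := by
      conv_lhs => rw [hA.spectral_theorem, Unitary.conjStarAlgAut_apply]
      rw [← smul_mul_assoc, ← mul_smul_comm, ← Matrix.diagonal_smul]
      congr 2
    rw [h1, ← hUinv, Matrix.exp_conj U _ hUunit, Matrix.exp_diagonal, hUinv]
    have h2 : (exp fun k => ζ * lam k) = fun k => Real.exp (ζ * lam k) := by
      funext k
      rw [Pi.coe_exp, ← Real.exp_eq_exp_ℝ]
    rw [h2]
  -- entrywise formula
  have hentry : ∀ ζ : ℝ, ((exp (ζ • A)) *ᵥ (fun _ => (1 : ℝ))) i =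
      ∑ k, B k i * (Real.exp (ζ * lam k) * (∑ j, B k j)) := by
    intro ζ
    rw [hexp ζ, ← Matrix.mulVec_mulVec, ← Matrix.mulVec_mulVec]
    have hstar : (star U) *ᵥ (fun _ => (1 : ℝ)) = fun k => ∑ j, B k j := by
      funext k
      simp [Matrix.mulVec, dotProduct, Matrix.star_apply, hUapply]
    rw [hstar]
    have hdiag : Matrix.diagonal (fun k => Real.exp (ζ * lam k)) *ᵥ (fun k => ∑ j, B k j)
        = fun k => Real.exp (ζ * lam k) * ∑ j, B k j := by
      funext k
      rw [Matrix.mulVec_diagonal]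
    rw [hdiag]
    simp [Matrix.mulVec, dotProduct, hUapply]
  -- rewrite the function as a finite sum
  have heqfun : ∀ ζ : ℝ,
      ((exp (ζ • A)) *ᵥ (fun _ => (1 : ℝ))) i / (Real.exp (ζ * lam1) * ∑ j, ψ1 j)
      = ∑ k, B k i * (Real.exp (ζ * lam k) * (∑ j, B k j)) /
          (Real.exp (ζ * lam1) * ∑ j, ψ1 j) := by
    intro ζ
    rw [hentry ζ, Finset.sum_div]
  have hlim : Tendsto (fun ζ : ℝ => ∑ k, B k i * (Real.exp (ζ * lam k) * (∑ j, B k j)) /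
      (Real.exp (ζ * lam1) * ∑ j, ψ1 j)) atTop
      (𝓝 (∑ k, if k = k0 then ψ1 i else 0)) := by
    apply tendsto_finset_sum
    intro k _
    by_cases hk : k = k0
    · subst hk
      simp only [if_pos rfl]
      have : ∀ ζ : ℝ, B k i * (Real.exp (ζ * lam k) * (∑ j, B k j)) /
          (Real.exp (ζ * lam1) * ∑ j, ψ1 j) = ψ1 i := by
        intro ζ
        have hd : (∑ j, B k j) = c0 * ∑ j, ψ1 j := by
          rw [Finset.mul_sum]
          exact Finset.sum_congr rfl fun j _ => hc0' j
        have hbi : B k i = c0 * ψ1 i := hc0' i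
        rw [hd, hbi, hk0]
        have hE : Real.exp (ζ * lam1) ≠ 0 := Real.exp_ne_zero _
        have hSne : (∑ j, ψ1 j) ≠ 0 := ne_of_gt hS
        field_simp
        linear_combination ψ1 i * hc0sq
      simp only [this]
      exact tendsto_const_nhds
    · simp only [if_neg hk]
      have heq : ∀ ζ : ℝ, B k i * (Real.exp (ζ * lam k) * (∑ j, B k j)) /
          (Real.exp (ζ * lam1) * ∑ j, ψ1 j)
          = (B k i * (∑ j, B k j) / (∑ j, ψ1 j)) * Real.exp (ζ * (lam k - lam1)) := by
        intro ζ
        rw [mul_sub, Real.exp_sub]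
        have hE : Real.exp (ζ * lam1) ≠ 0 := Real.exp_ne_zero _
        have hSne : (∑ j, ψ1 j) ≠ 0 := ne_of_gt hS
        field_simp
      simp only [heq]
      rw [show (0 : ℝ) = (B k i * (∑ j, B k j) / (∑ j, ψ1 j)) * 0 by ring]
      apply Tendsto.const_mul
      have h1 : Tendsto (fun ζ : ℝ => ζ * (lam k - lam1)) atTop atBot :=
        Filter.Tendsto.atTop_mul_const_of_neg (sub_neg.mpr (hlt k hk)) tendsto_id
      exact Real.tendsto_exp_atBot.comp h1
  have hsum : (∑ k, if k = k0 then ψ1 i else 0) = ψ1 i := by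
    simp [Finset.sum_ite_eq']
  rw [← hsum]
  exact Tendsto.congr (fun ζ => (heqfun ζ).symm) hlim
end

section
/- Let A be the adjacency matrix of a finite simple connected undirected graph, and let i, j be two nodes whose eigenvector centralities differ: ψ_{1,i} ≠ ψ_{1,j}. Then the set of interlacing points {ζ > 0 : C_i(ζ) = C_j(ζ)} where C_i(ζ) = (e^{ζA})_{ii}, is finite (possibly empty). -/
open NormedSpace

private lemma herm_exp_entry {n : ℕ} (A : Matrix (Fin n) (Fin n) ℝ)
    (hA : A.IsHermitian) (ζ : ℝ) (i : Fin n) :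
    (exp (ζ • A)) i i = ∑ k, Real.exp (ζ * hA.eigenvalues k) * (hA.eigenvectorBasis k i) ^ 2 := by
  set U : Matrix (Fin n) (Fin n) ℝ := (hA.eigenvectorUnitary : Matrix (Fin n) (Fin n) ℝ) with hU
  have hUunit : IsUnit U := ⟨Unitary.toUnits hA.eigenvectorUnitary, rfl⟩
  have hUinv : U⁻¹ = star U := by
    apply Matrix.inv_eq_left_inv
    exact (Matrix.mem_unitaryGroup_iff').mp hA.eigenvectorUnitary.2
  have hdecomp : exp (ζ • A) = U *
      Matrix.diagonal (fun k => Real.exp (ζ * hA.eigenvalues k)) * star U := by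
    have hspec := hA.spectral_theorem
    rw [Unitary.conjStarAlgAut_apply] at hspec
    have h1 : ζ • A = U * Matrix.diagonal (fun k => ζ * hA.eigenvalues k) * U⁻¹ := by
      rw [hUinv]
      conv_lhs => rw [hspec]
      have : Matrix.diagonal (fun k => ζ * hA.eigenvalues k)
          = ζ • Matrix.diagonal (RCLike.ofReal ∘ hA.eigenvalues : Fin n → ℝ) := by
        rw [← Matrix.diagonal_smul]; congr 1
      rw [this, mul_smul_comm, smul_mul_assoc]
    rw [h1, Matrix.exp_conj U _ hUunit, Matrix.exp_diagonal, hUinv]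
    congr 2
    funext k
    rw [Pi.exp_def, ← Real.exp_eq_exp_ℝ]
  rw [hdecomp, Matrix.mul_apply]
  refine Finset.sum_congr rfl fun k _ => ?_
  rw [Matrix.mul_diagonal, Matrix.star_apply, star_trivial]
  have : U i k = hA.eigenvectorBasis k i := rfl
  rw [this]; ring

/-- if two nodes have different eigenvector centralities, the set of
interlacing points `{ζ > 0 : C_i(ζ) = C_j(ζ)}` of their circulabilities is finite. -/
theorem interlacing_points_finite {n : ℕ} (G : SimpleGraph (Fin n))
    [DecidableRel G.Adj] (hconn : G.Connected) (lam1 : ℝ) (ψ1 : Fin n → ℝ)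
    (heig : (G.adjMatrix ℝ).mulVec ψ1 = lam1 • ψ1)
    (hpos : ∀ j, 0 < ψ1 j)
    (hnorm : ∑ j, (ψ1 j) ^ 2 = 1)
    (hmax : ∀ (μ : ℝ) (v : Fin n → ℝ), v ≠ 0 →
      (G.adjMatrix ℝ).mulVec v = μ • v → μ ≤ lam1)
    (hsimple : ∀ v : Fin n → ℝ, (G.adjMatrix ℝ).mulVec v = lam1 • v → ∃ c : ℝ, v = c • ψ1)
    (i j : Fin n) (hne : ψ1 i ≠ ψ1 j) :
    {ζ : ℝ | 0 < ζ ∧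
        (exp (ζ • (G.adjMatrix ℝ))) i i = (exp (ζ • (G.adjMatrix ℝ))) j j}.Finite := by
  classical
  set A := G.adjMatrix ℝ with hAdef
  have hA : A.IsHermitian := by
    rw [Matrix.IsHermitian, Matrix.conjTranspose_eq_transpose_of_trivial]
    exact G.transpose_adjMatrix
  set μ : Fin n → ℝ := hA.eigenvalues with hμ
  set v : Fin n → Fin n → ℝ := fun k => ⇑(hA.eigenvectorBasis k) with hv
  have hvb : ∀ k l, v k l = hA.eigenvectorBasis k l := fun _ _ => rfl
  set c : Fin n → ℝ := fun k => (v k i) ^ 2 - (v k j) ^ 2 with hc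
  set F : ℝ → ℝ := fun ζ => ∑ k, c k * Real.exp (ζ * μ k) with hF
  -- the set in question is the zero set of F on (0, ∞)
  have hSeq : ∀ ζ : ℝ, ((exp (ζ • A)) i i = (exp (ζ • A)) j j) ↔ F ζ = 0 := by
    intro ζ
    rw [herm_exp_entry A hA ζ i, herm_exp_entry A hA ζ j, ← sub_eq_zero,
      ← Finset.sum_sub_distrib]
    have heq : ∑ k, (Real.exp (ζ * hA.eigenvalues k) * (hA.eigenvectorBasis k i) ^ 2
        - Real.exp (ζ * hA.eigenvalues k) * (hA.eigenvectorBasis k j) ^ 2) = F ζ := by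
      rw [hF]
      exact Finset.sum_congr rfl fun k _ => by simp only [hc, hvb, hμ]; ring
    rw [heq]
  -- eigenvector facts
  have hvne : ∀ k, v k ≠ 0 := by
    intro k hk
    have := hA.eigenvectorBasis.orthonormal.ne_zero k
    apply this
    ext l
    exact congrFun hk l
  have hveig : ∀ k, A.mulVec (v k) = μ k • v k := fun k => hA.mulVec_eigenvectorBasis k
  have hμle : ∀ k, μ k ≤ lam1 := fun k => hmax (μ k) (v k) (hvne k) (hveig k)
  have hvnorm : ∀ k, ∑ l, (v k l) ^ 2 = 1 := by
    intro k
    have h1 : ‖hA.eigenvectorBasis k‖ = 1 := hA.eigenvectorBasis.orthonormal.1 k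
    rw [EuclideanSpace.norm_eq] at h1
    have h2 : ∑ l, ‖hA.eigenvectorBasis k l‖ ^ 2 = 1 := by
      have := congrArg (fun x : ℝ => x ^ 2) h1
      simpa [Real.sq_sqrt (Finset.sum_nonneg fun l _ => sq_nonneg _)] using this
    rw [← h2]
    refine Finset.sum_congr rfl fun l _ => ?_
    rw [Real.norm_eq_abs, sq_abs, hvb]
  have hD : (ψ1 i) ^ 2 - (ψ1 j) ^ 2 ≠ 0 := by
    have hi := hpos i; have hj := hpos j
    intro h
    apply hne
    nlinarith [sq_nonneg (ψ1 i - ψ1 j), sq_nonneg (ψ1 i + ψ1 j)]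
  have hck : ∀ k, μ k = lam1 → c k = (ψ1 i) ^ 2 - (ψ1 j) ^ 2 := by
    intro k hk
    obtain ⟨a, ha⟩ := hsimple (v k) (by rw [hveig k, hk])
    have ha2 : a ^ 2 = 1 := by
      have := hvnorm k
      rw [ha] at this
      simp only [Pi.smul_apply, smul_eq_mul, mul_pow] at this
      rw [← Finset.mul_sum, hnorm, mul_one] at this
      exact this
    rw [hc]
    simp only [ha, Pi.smul_apply, smul_eq_mul, mul_pow, ha2, one_mul]
  -- lam1 is an eigenvalue
  have hex : ∃ k, μ k = lam1 := by
    by_contra hnone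
    push_neg at hnone
    have hlt : ∀ k, μ k < lam1 := fun k => lt_of_le_of_ne (hμle k) (hnone k)
    set B : Matrix (Fin n) (Fin n) ℝ := lam1 • (1 : Matrix (Fin n) (Fin n) ℝ) - A with hB
    set U : Matrix (Fin n) (Fin n) ℝ := (hA.eigenvectorUnitary : Matrix (Fin n) (Fin n) ℝ) with hU
    have hUs : U * star U = 1 := (Matrix.mem_unitaryGroup_iff).mp hA.eigenvectorUnitary.2
    have hBdecomp : B = U * Matrix.diagonal (fun k => lam1 - μ k) * star U := by
      have hspec := hA.spectral_theorem
      rw [Unitary.conjStarAlgAut_apply] at hspec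
      have h1 : Matrix.diagonal (fun k => lam1 - μ k)
          = lam1 • (1 : Matrix (Fin n) (Fin n) ℝ)
            - Matrix.diagonal (RCLike.ofReal ∘ μ : Fin n → ℝ) := by
        ext k l
        rcases eq_or_ne k l with h | h <;>
          simp [Matrix.diagonal_apply, Matrix.one_apply, h, Function.comp]
      rw [h1, Matrix.mul_sub, Matrix.sub_mul, ← hspec]
      congr 1
      rw [mul_smul_comm, smul_mul_assoc, mul_one, hUs]
    have hdet : IsUnit B.det := by
      have hUs' : star U * U = 1 := (Matrix.mem_unitaryGroup_iff').mp hA.eigenvectorUnitary.2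
      rw [hBdecomp, Matrix.det_mul, Matrix.det_mul, mul_comm, ← mul_assoc, ← Matrix.det_mul, hUs']
      simp only [Matrix.det_one, one_mul, Matrix.det_diagonal]
      exact (Finset.prod_pos fun k _ => sub_pos.mpr (hlt k)).ne'.isUnit
    have hBv : B.mulVec ψ1 = 0 := by
      rw [hB, Matrix.sub_mulVec, Matrix.smul_mulVec, Matrix.one_mulVec, heig, sub_self]
    have : ψ1 = 0 := by
      have h1 : B⁻¹.mulVec (B.mulVec ψ1) = ψ1 := by
        rw [Matrix.mulVec_mulVec, Matrix.nonsing_inv_mul B hdet, Matrix.one_mulVec]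
      rw [hBv] at h1
      rw [← h1, Matrix.mulVec_zero]
    exact absurd (congrFun this i) (hpos i).ne'
  -- the renormalized function and its limit
  set G' : ℝ → ℝ := fun ζ => ∑ k, c k * Real.exp (ζ * (μ k - lam1)) with hG'
  have hFG : ∀ ζ, F ζ = Real.exp (ζ * lam1) * G' ζ := by
    intro ζ
    rw [hF, hG', Finset.mul_sum]
    refine Finset.sum_congr rfl fun k _ => ?_
    rw [← mul_assoc, mul_comm (Real.exp (ζ * lam1)) (c k), mul_assoc, ← Real.exp_add]
    ring_nf
  set L : ℝ := ∑ k, (if μ k = lam1 then c k else 0) with hL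
  have hLne : L ≠ 0 := by
    rw [hL, ← Finset.sum_filter]
    have hcongr : ∀ k ∈ Finset.univ.filter (fun k => μ k = lam1),
        c k = (ψ1 i) ^ 2 - (ψ1 j) ^ 2 := by
      intro k hk
      exact hck k (Finset.mem_filter.mp hk).2
    rw [Finset.sum_congr rfl hcongr, Finset.sum_const, nsmul_eq_mul]
    apply mul_ne_zero _ hD
    obtain ⟨k0, hk0⟩ := hex
    have : k0 ∈ Finset.univ.filter (fun k => μ k = lam1) := Finset.mem_filter.mpr ⟨by simp, hk0⟩
    exact Nat.cast_ne_zero.mpr (Finset.card_ne_zero_of_mem this)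
  have htend : Filter.Tendsto G' Filter.atTop (nhds L) := by
    rw [hG', hL]
    apply tendsto_finset_sum
    intro k _
    by_cases hk : μ k = lam1
    · simp only [hk, sub_self, mul_zero, Real.exp_zero, mul_one, if_pos]
      exact tendsto_const_nhds
    · rw [if_neg hk]
      have hneg : μ k - lam1 < 0 := sub_neg.mpr (lt_of_le_of_ne (hμle k) hk)
      have h1 : Filter.Tendsto (fun ζ : ℝ => ζ * (μ k - lam1)) Filter.atTop Filter.atBot :=
        Filter.tendsto_id.atTop_mul_const_of_neg hneg
      have h2 : Filter.Tendsto (fun ζ : ℝ => Real.exp (ζ * (μ k - lam1)))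
          Filter.atTop (nhds 0) := Real.tendsto_exp_atBot.comp h1
      simpa using h2.const_mul (c k)
  obtain ⟨M, hM⟩ : ∃ M : ℝ, ∀ ζ ≥ M, G' ζ ≠ 0 :=
    Filter.eventually_atTop.mp (htend.eventually_ne hLne)
  have hFne : ∀ ζ ≥ M, F ζ ≠ 0 := fun ζ hζ =>
    (hFG ζ) ▸ mul_ne_zero (Real.exp_ne_zero _) (hM ζ hζ)
  -- F is analytic
  have hFanal : AnalyticOnNhd ℝ F Set.univ := by
    intro x _
    apply Finset.analyticAt_fun_sum
    intro k _
    exact analyticAt_const.mul (analyticAt_rexp.comp (analyticAt_id.mul analyticAt_const))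
  -- finish by contradiction
  set S : Set ℝ := {ζ : ℝ | 0 < ζ ∧ (exp (ζ • A)) i i = (exp (ζ • A)) j j} with hS
  by_contra hinf
  have hinf : S.Infinite := hinf
  have hsub : S ⊆ Set.Icc 0 M := by
    intro ζ hζ
    obtain ⟨hζpos, hζeq⟩ := hζ
    refine ⟨hζpos.le, ?_⟩
    by_contra hgt
    push_neg at hgt
    exact hFne ζ hgt.le ((hSeq ζ).mp hζeq)
  obtain ⟨x, hxK, hx⟩ := hinf.exists_accPt_of_subset_isCompact isCompact_Icc hsub
  have hfreq : ∃ᶠ z in nhdsWithin x {x}ᶜ, F z = 0 := by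
    have h1 : ∃ᶠ z in nhdsWithin x {x}ᶜ, z ∈ S := by
      rwa [Filter.frequently_mem_iff_neBot]
    exact h1.mono fun z hz => (hSeq z).mp hz.2
  have heqz : Set.EqOn F 0 Set.univ :=
    hFanal.eqOn_zero_of_preconnected_of_frequently_eq_zero isPreconnected_univ
      (Set.mem_univ x) hfreq
  exact hFne M le_rfl (heqz (Set.mem_univ M))
end
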